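/- Let φ be an unsatisfiable 2SAT formula on n variables, let w ∈ ℤ^n be a nonzero integer weight vector, and set W = Σ_{i=1}^n |w_i|. Then for every point z = (y, x) of the polytope Q_n, the value ⟨c_φ, y⟩ + (1/(3W))·⟨w, x⟩ is at most m(φ) − 2/3, where m(φ) is the number of clauses of φ. -/

import Mathlib

/-- A 2SAT clause on `n` variables: an unordered pair of literals on distinct
variables. A literal is a pair `(i, b) : Fin n × Bool`, where `(i, true)` stands
for `x_i` and `(i, false)` for `¬x_i`. -/
abbrev Clause (n : ℕ) := {C : Sym2 (Fin n × Bool) // ¬ (Sym2.map Prod.fst C).IsDiag}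

/-- `σ` satisfies the formula `φ` if every clause of `φ` contains a literal made
true by `σ`. -/
def Satisfies {n : ℕ} (φ : Finset (Clause n)) (σ : Fin n → Bool) : Prop :=
  ∀ C ∈ φ, ∃ l ∈ C.1, σ l.1 = l.2

/-- The 0/1 encoding `y^φ` of a formula `φ`. -/
def yVec {n : ℕ} (φ : Finset (Clause n)) : Clause n → ℝ :=
  fun C => if C ∈ φ then 1 else 0

/-- The 0/1 encoding `x^σ` of an assignment `σ`. -/
def xVec {n : ℕ} (σ : Fin n → Bool) : Fin n → ℝ :=
  fun i => if σ i then 1 else 0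

/-- The set `S` of all pairs (encoded formula, encoded satisfying assignment). -/
def SatSet (n : ℕ) : Set ((Clause n → ℝ) × (Fin n → ℝ)) :=
  {p | ∃ (ψ : Finset (Clause n)) (σ : Fin n → Bool), Satisfies ψ σ ∧ p = (yVec ψ, xVec σ)}

/-- The polytope `Q_n`, the convex hull of `S`. -/
def Qn (n : ℕ) : Set ((Clause n → ℝ) × (Fin n → ℝ)) :=
  convexHull ℝ (SatSet n)

/-- The objective vector `c_φ`: `+1` on clauses of `φ`, `-1` elsewhere. -/
def cVec {n : ℕ} (φ : Finset (Clause n)) : Clause n → ℝ :=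
  fun C => if C ∈ φ then 1 else -1

/-- If the 2SAT formula `φ` on `n ≥ 2` variables is unsatisfiable,
`w ∈ ℤ^n` is a nonzero integer weight vector and `W = Σᵢ |wᵢ|`, then for every
point `z = (y, x)` of `Q_n` we have
`⟨c_φ, y⟩ + (1/(3W))·⟨w, x⟩ ≤ m(φ) - 2/3`. -/
theorem stmt_6 (n : ℕ) (hn : 2 ≤ n) (φ : Finset (Clause n))
    (hunsat : ¬ ∃ σ : Fin n → Bool, Satisfies φ σ)
    (w : Fin n → ℤ) (hw : w ≠ 0)
    (z : (Clause n → ℝ) × (Fin n → ℝ)) (hz : z ∈ Qn n) :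
    ∑ C : Clause n, cVec φ C * z.1 C
        + (1 / (3 * ∑ i, |(w i : ℝ)|)) * ∑ i, (w i : ℝ) * z.2 i
      ≤ (φ.card : ℝ) - 2 / 3 := by

  classical
  set W : ℝ := ∑ i, |(w i : ℝ)| with hWdef
  have hWpos : 0 < W := by
    obtain ⟨i, hi⟩ : ∃ i, w i ≠ 0 := by
      by_contra h; push_neg at h; exact hw (funext h)
    refine Finset.sum_pos' (fun j _ => abs_nonneg _) ⟨i, Finset.mem_univ i, ?_⟩
    simpa using hi
  set a : ℝ := 1 / (3 * W) with hadef
  have hanneg : 0 ≤ a := by positivity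
  have hlin : IsLinearMap ℝ (fun p : (Clause n → ℝ) × (Fin n → ℝ) =>
      ∑ C : Clause n, cVec φ C * p.1 C + a * ∑ i, (w i : ℝ) * p.2 i) := by
    constructor
    · intro p q
      simp only [Prod.fst_add, Prod.snd_add, Pi.add_apply, mul_add,
        Finset.sum_add_distrib]
      ring
    · intro c p
      simp only [Prod.smul_fst, Prod.smul_snd, Pi.smul_apply, smul_eq_mul,
        Finset.mul_sum, mul_add]
      congr 1 <;> exact Finset.sum_congr rfl (fun _ _ => by ring)
  have key : ∀ p ∈ SatSet n,
      ∑ C : Clause n, cVec φ C * p.1 C + a * ∑ i, (w i : ℝ) * p.2 i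
        ≤ (φ.card : ℝ) - 2 / 3 := by
    rintro p ⟨ψ, σ, hσ, rfl⟩
    have hns : ¬ Satisfies φ σ := fun h => hunsat ⟨σ, h⟩
    unfold Satisfies at hns
    push_neg at hns
    obtain ⟨C₀, hC₀φ, hC₀⟩ := hns
    have hC₀ψ : C₀ ∉ ψ := fun h => by
      obtain ⟨l, hl, he⟩ := hσ C₀ h
      exact hC₀ l hl he
    have h1 : ∑ C : Clause n, cVec φ C * yVec ψ C ≤ (φ.card : ℝ) - 1 := by
      have hcard : ((φ.erase C₀).card : ℝ) = (φ.card : ℝ) - 1 := by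
        rw [Finset.card_erase_of_mem hC₀φ]
        have : 1 ≤ φ.card := Finset.card_pos.mpr ⟨C₀, hC₀φ⟩
        push_cast [Nat.cast_sub this]
        ring
      calc ∑ C : Clause n, cVec φ C * yVec ψ C
          ≤ ∑ C : Clause n, (if C ∈ φ.erase C₀ then (1:ℝ) else 0) := by
            apply Finset.sum_le_sum
            intro C _
            unfold cVec yVec
            by_cases h1 : C ∈ φ <;> by_cases h2 : C ∈ ψ <;>
              by_cases h3 : C = C₀ <;> simp_all <;> norm_num
        _ = ((φ.erase C₀).card : ℝ) := by
            rw [Finset.sum_ite_mem, Finset.univ_inter, Finset.sum_const,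
              nsmul_eq_mul, mul_one]
        _ = (φ.card : ℝ) - 1 := hcard
    have h2 : ∑ i, (w i : ℝ) * xVec σ i ≤ W := by
      apply Finset.sum_le_sum
      intro i _
      unfold xVec
      by_cases h : σ i <;> simp [h, le_abs_self, abs_nonneg]
    have h3 : a * ∑ i, (w i : ℝ) * xVec σ i ≤ 1 / 3 := by
      have := mul_le_mul_of_nonneg_left h2 hanneg
      have haW : a * W = 1 / 3 := by
        rw [hadef]; field_simp
      linarith
    simp only
    linarith
  have hconv : Convex ℝ {p : (Clause n → ℝ) × (Fin n → ℝ) |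
      ∑ C : Clause n, cVec φ C * p.1 C + a * ∑ i, (w i : ℝ) * p.2 i
        ≤ (φ.card : ℝ) - 2 / 3} := convex_halfSpace_le hlin _
  exact convexHull_min key hconv hz
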